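/- Let $u:(0,\infty)\to\mathbb{R}$ be twice differentiable with $\lim_{x\to\infty} x^2 u''(x) = +\infty$. For $\mu > \mu_* := -\lim_{x\to\infty} u'(x)$ let $\varkappa(\mu)$ be the largest solution of $u'(\varkappa) = -\mu$, and set $S_\mu(a,b) = \sum_{a \le k < b} e^{-\mu k - u(k)}$, $S_\mu = S_\mu(1,\infty)$. Then for any $0 < \lambda_1 < 1 < \lambda_2$, $\lim_{\mu \downarrow \mu_*} S_\mu(\varkappa\lambda_1, \varkappa\lambda_2)/S_\mu = 1$. -/

import Mathlib

open Filter Set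

/-- The filter of real `μ` approaching `μ⋆ ∈ ℝ ∪ {±∞}` from above. -/
noncomputable def muDownTo (μstar : EReal) : Filter ℝ :=
  Filter.comap (fun μ : ℝ => (μ : EReal)) (nhdsWithin μstar (Set.Ioi μstar))

/-- `S_μ(a,b) = ∑_{a ≤ k < b} e^{-μ k - u(k)}`, summing over integers `k ≥ 1`. -/
noncomputable def Spart (u : ℝ → ℝ) (μ a b : ℝ) : ℝ :=
  ∑' k : ℕ, if a ≤ (k : ℝ) + 1 ∧ (k : ℝ) + 1 < b then
    Real.exp (-(μ * ((k : ℝ) + 1)) - u ((k : ℝ) + 1)) else 0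

/-- `S_μ = ∑_{k ≥ 1} e^{-μ k - u(k)}`. -/
noncomputable def Stot (u : ℝ → ℝ) (μ : ℝ) : ℝ :=
  ∑' k : ℕ, Real.exp (-(μ * ((k : ℝ) + 1)) - u ((k : ℝ) + 1))

set_option maxHeartbeats 1000000

lemma geom_inv_bound {x : ℝ} (hx : 0 < x) : (1 - Real.exp (-x))⁻¹ ≤ 1 + 1/x := by
  have h1 : Real.exp (-x) ≤ 1/(1+x) := by
    rw [Real.exp_neg, div_eq_inv_mul, mul_one]
    exact inv_anti₀ (by linarith) (by linarith [Real.add_one_le_exp x])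
  have h2 : (0:ℝ) < x/(1+x) := by positivity
  have h3 : x/(1+x) ≤ 1 - Real.exp (-x) := by
    have : (1:ℝ) - 1/(1+x) = x/(1+x) := by field_simp; ring
    linarith
  calc (1 - Real.exp (-x))⁻¹ ≤ (x/(1+x))⁻¹ := inv_anti₀ h2 h3
    _ = (1+x)/x := by rw [inv_div]
    _ = 1/x + 1 := by field_simp
    _ = 1 + 1/x := by ring

lemma core_estimate (u : ℝ → ℝ) (μ μ0 C M lam1 lam2 : ℝ) (Rn : ℕ) (κv : ℝ) (ε : ℝ)
    (hlam1 : 0 < lam1) (hlam1' : lam1 < 1) (hlam2 : 1 < lam2) (hε : 0 < ε)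
    (hdiff : ∀ x ∈ Set.Ioi (0:ℝ),
      DifferentiableAt ℝ u x ∧ DifferentiableAt ℝ (deriv u) x)
    (hM1 : 1 ≤ M) (hMa : 16*lam1/(ε*(1-lam1)^2) ≤ M)
    (hMb : 16/(ε*(1-1/lam2)*(lam2-1)) ≤ M)
    (hRn1 : 1 ≤ (Rn:ℝ))
    (hM' : ∀ x:ℝ, (Rn:ℝ) ≤ x → M ≤ x^2 * deriv (deriv u) x)
    (hmin : ∀ t ∈ Set.Icc (1:ℝ) (Rn:ℝ), |μ0| * Rn + (u Rn - u t) ≤ C)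
    (hμle : μ ≤ μ0)
    (hκv : deriv u κv = -μ)
    (hK1 : (Rn:ℝ)/lam1 ≤ κv) (hK2 : 2/(1-lam1) ≤ κv) (hK3 : 2/(lam2-1) ≤ κv)
    (hK4 : 16*((Rn:ℝ)*Real.exp C + 1)/(ε*(1-lam1)) ≤ κv) (hK5 : 16/(ε*(lam2-1)) ≤ κv) :
    dist (Spart u μ (κv * lam1) (κv * lam2) / Stot u μ) 1 < ε := by
  have hα : (0:ℝ) < 1 - lam1 := by linarith
  have hβ : (0:ℝ) < lam2 - 1 := by linarith
  have hlam2pos : (0:ℝ) < lam2 := by linarith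
  have hc : (0:ℝ) < 1 - 1/lam2 := by
    have : 1/lam2 < 1 := by rw [div_lt_one hlam2pos]; linarith
    linarith
  have hMpos : (0:ℝ) < M := by linarith
  have hκpos : (0:ℝ) < κv := lt_of_lt_of_le (by positivity) hK2
  set a := κv * lam1 with ha
  set b := κv * lam2 with hb
  have hκα : 2 ≤ κv * (1 - lam1) := (div_le_iff₀ hα).1 hK2
  have hκβ : 2 ≤ κv * (lam2 - 1) := (div_le_iff₀ hβ).1 hK3
  have haRn : (Rn:ℝ) ≤ a := by
    rw [ha]; rw [div_le_iff₀ hlam1] at hK1; linarith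
  have ha1 : (1:ℝ) ≤ a := le_trans hRn1 haRn
  have hapos : (0:ℝ) < a := by linarith
  have haκ2 : a + 2 ≤ κv := by rw [ha]; nlinarith
  have haκ : a ≤ κv := by linarith
  have hκb2 : κv + 2 ≤ b := by rw [hb]; nlinarith
  have hκb : κv ≤ b := by linarith
  have hbpos : (0:ℝ) < b := by linarith
  have hb1 : (1:ℝ) ≤ b := by linarith
  have hab : a ≤ b := by linarith
  have hRnκ : (Rn:ℝ) ≤ κv := le_trans haRn haκ
  have hRnpos : (0:ℝ) < Rn := by linarith
  -- derivative facts
  have hφd : ∀ x:ℝ, 0 < x → HasDerivAt (fun y => μ * y + u y) (μ + deriv u x) x := by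
    intro x hx
    have h1 : HasDerivAt (fun y : ℝ => μ * y) (μ * 1) x := (hasDerivAt_id x).const_mul μ
    have h2 := h1.add ((hdiff x hx).1.hasDerivAt)
    rw [mul_one] at h2
    exact h2
  set φ : ℝ → ℝ := fun y => μ * y + u y with hφdef
  have hu'' : ∀ x:ℝ, (Rn:ℝ) ≤ x → 0 < deriv (deriv u) x := by
    intro x hx
    have h := hM' x hx
    nlinarith
  have humono : MonotoneOn (deriv u) (Set.Ici (Rn:ℝ)) := by
    apply (strictMonoOn_of_deriv_pos (convex_Ici _) ?_ ?_).monotoneOn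
    · intro x hx
      exact ((hdiff x (lt_of_lt_of_le hRnpos hx)).2).continuousAt.continuousWithinAt
    · intro x hx
      rw [interior_Ici] at hx
      exact hu'' x hx.le
  have hgmono : MonotoneOn (fun x => deriv u x + M * x⁻¹) (Set.Ici (Rn:ℝ)) := by
    apply monotoneOn_of_deriv_nonneg (convex_Ici _)
    · intro x hx
      have hxpos : (0:ℝ) < x := lt_of_lt_of_le hRnpos hx
      exact (((hdiff x hxpos).2).continuousAt.add
        (continuousAt_const.mul (continuousAt_inv₀ (ne_of_gt hxpos)))).continuousWithinAt
    · intro x hx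
      rw [interior_Ici] at hx
      have hxpos : (0:ℝ) < x := lt_of_lt_of_le hRnpos hx.le
      exact (((hdiff x hxpos).2).add
        ((hasDerivAt_inv (ne_of_gt hxpos)).const_mul M).differentiableAt).differentiableWithinAt
    · intro x hx
      rw [interior_Ici] at hx
      have hxpos : (0:ℝ) < x := lt_of_lt_of_le hRnpos hx.le
      rw [show (fun x => deriv u x + M * x⁻¹) = (deriv u + fun y => M * y⁻¹) from rfl]
      rw [(((hdiff x hxpos).2).hasDerivAt.add
        ((hasDerivAt_inv (ne_of_gt hxpos)).const_mul M)).deriv]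
      have h2 : (0:ℝ) < x^2 := by positivity
      have h3 := hM' x hx.le
      have h6 : M * (x^2)⁻¹ ≤ deriv (deriv u) x := by
        rw [← mul_le_mul_iff_of_pos_right h2]
        calc M * (x^2)⁻¹ * x^2 = M := by field_simp
          _ ≤ x^2 * deriv (deriv u) x := h3
          _ = deriv (deriv u) x * x^2 := by ring
      linarith
  have hφanti : AntitoneOn φ (Set.Icc (Rn:ℝ) κv) := by
    apply antitoneOn_of_deriv_nonpos (convex_Icc _ _)
    · intro x hx
      exact (hφd x (lt_of_lt_of_le hRnpos hx.1)).continuousAt.continuousWithinAt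
    · intro x hx
      rw [interior_Icc] at hx
      exact (hφd x (lt_of_lt_of_le hRnpos hx.1.le)).differentiableAt.differentiableWithinAt
    · intro x hx
      rw [interior_Icc] at hx
      have hxpos : (0:ℝ) < x := lt_of_lt_of_le hRnpos hx.1.le
      rw [(hφd x hxpos).deriv]
      have h := humono (Set.mem_Ici.2 hx.1.le) (Set.mem_Ici.2 hRnκ) hx.2.le
      rw [hκv] at h
      linarith
  have hφmono : MonotoneOn φ (Set.Ici κv) := by
    apply monotoneOn_of_deriv_nonneg (convex_Ici _)
    · intro x hx
      exact (hφd x (lt_of_lt_of_le (lt_of_lt_of_le hRnpos hRnκ) hx)).continuousAt.continuousWithinAt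
    · intro x hx
      rw [interior_Ici] at hx
      exact (hφd x (lt_of_lt_of_le (lt_of_lt_of_le hRnpos hRnκ) hx.le)).differentiableAt.differentiableWithinAt
    · intro x hx
      rw [interior_Ici] at hx
      have hxpos : (0:ℝ) < x := lt_of_lt_of_le (lt_of_lt_of_le hRnpos hRnκ) hx.le
      rw [(hφd x hxpos).deriv]
      have h := humono (Set.mem_Ici.2 hRnκ) (Set.mem_Ici.2 (le_trans hRnκ hx.le)) hx.le
      rw [hκv] at h
      linarith
  have hψanti : AntitoneOn (fun x => φ x + (M*(1-lam1)) * Real.log x) (Set.Icc (Rn:ℝ) a) := by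
    apply antitoneOn_of_deriv_nonpos (convex_Icc _ _)
    · intro x hx
      have hxpos : (0:ℝ) < x := lt_of_lt_of_le hRnpos hx.1
      exact ((hφd x hxpos).continuousAt.add
        (continuousAt_const.mul (Real.continuousAt_log (ne_of_gt hxpos)))).continuousWithinAt
    · intro x hx
      rw [interior_Icc] at hx
      have hxpos : (0:ℝ) < x := lt_of_lt_of_le hRnpos hx.1.le
      exact ((hφd x hxpos).add
        ((Real.hasDerivAt_log (ne_of_gt hxpos)).const_mul _)).differentiableAt.differentiableWithinAt
    · intro x hx
      rw [interior_Icc] at hx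
      have hxpos : (0:ℝ) < x := lt_of_lt_of_le hRnpos hx.1.le
      rw [show (fun x => φ x + M * (1 - lam1) * Real.log x) = (φ + fun y => M * (1 - lam1) * Real.log y) from rfl]
      rw [((hφd x hxpos).add
        ((Real.hasDerivAt_log (ne_of_gt hxpos)).const_mul (M*(1-lam1)))).deriv]
      have hkey : deriv u x + M * x⁻¹ ≤ -μ + M * κv⁻¹ := by
        rw [← hκv]
        exact hgmono (Set.mem_Ici.2 hx.1.le) (Set.mem_Ici.2 hRnκ) (le_trans hx.2.le haκ)
      have hxa : x ≤ a := hx.2.le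
      have hinv : a⁻¹ ≤ x⁻¹ := inv_anti₀ hxpos hxa
      have hId : M * lam1 * a⁻¹ = M * κv⁻¹ := by
        rw [ha, mul_inv]
        field_simp
      have h7 : M * κv⁻¹ ≤ M * lam1 * x⁻¹ := by
        rw [← hId]
        exact mul_le_mul_of_nonneg_left hinv (by positivity)
      nlinarith [hkey, h7]
  set d : ℝ := M * (1-1/lam2) / κv with hd
  have hdpos : (0:ℝ) < d := by rw [hd]; positivity
  have hχmono : MonotoneOn (fun x => φ x - d * x) (Set.Ici b) := by
    apply monotoneOn_of_deriv_nonneg (convex_Ici _)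
    · intro x hx
      have hxpos : (0:ℝ) < x := lt_of_lt_of_le hbpos hx
      exact ((hφd x hxpos).sub ((hasDerivAt_id x).const_mul d)).continuousAt.continuousWithinAt
    · intro x hx
      rw [interior_Ici] at hx
      have hxpos : (0:ℝ) < x := lt_of_lt_of_le hbpos hx.le
      exact ((hφd x hxpos).sub ((hasDerivAt_id x).const_mul d)).differentiableAt.differentiableWithinAt
    · intro x hx
      rw [interior_Ici] at hx
      have hxpos : (0:ℝ) < x := lt_of_lt_of_le hbpos hx.le
      have hder := ((hφd x hxpos).sub ((hasDerivAt_id x).const_mul d)).deriv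
      simp only [id_eq, mul_one] at hder
      rw [show (fun x => φ x - d * x) = (φ - fun y => d * y) from rfl, hder]
      have hkey : -μ + M * κv⁻¹ ≤ deriv u x + M * x⁻¹ := by
        rw [← hκv]
        exact hgmono (Set.mem_Ici.2 hRnκ) (Set.mem_Ici.2 (le_trans hRnκ (le_trans hκb hx.le))) (le_trans hκb hx.le)
      have hinv : x⁻¹ ≤ b⁻¹ := inv_anti₀ hbpos hx.le
      have hId : M * κv⁻¹ - M * b⁻¹ = d := by
        rw [hd, hb, mul_inv]
        field_simp
      have h8 : M * x⁻¹ ≤ M * b⁻¹ := mul_le_mul_of_nonneg_left hinv (by positivity)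
      linarith
  -- sums setup
  set G : ℕ → ℝ := fun n => Real.exp (-(φ ((n:ℝ)+1))) with hG
  have hGpos : ∀ n, 0 < G n := fun n => Real.exp_pos _
  have hStot : Stot u μ = ∑' n, G n := by
    rw [Stot]
    apply tsum_congr
    intro n
    rw [hG]
    congr 1
    simp only [hφdef]
    ring
  set nb : ℕ := ⌈b⌉₊ with hnb
  have hbnb : b ≤ (nb:ℝ) := Nat.le_ceil b
  have hnbb : (nb:ℝ) < b + 1 := Nat.ceil_lt_add_one hbpos.le
  have hnb1 : 1 ≤ nb := Nat.ceil_pos.2 hbpos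
  have hχineq : ∀ x:ℝ, b ≤ x → φ b + d * (x - b) ≤ φ x := by
    intro x hx
    have h := hχmono (Set.mem_Ici.2 le_rfl) (Set.mem_Ici.2 hx) hx
    simp only at h
    linarith only [h]
  have hGb : ∀ (n:ℕ), b ≤ (n:ℝ)+1 →
      G n ≤ Real.exp (-(φ b)) * Real.exp (-(d * ((n:ℝ)+1-b))) := by
    intro n hn
    rw [hG, ← Real.exp_add]
    apply Real.exp_le_exp.2
    have h := hχineq ((n:ℝ)+1) hn
    linarith only [h]
  have hexpd1 : Real.exp (-d) < 1 := by
    rw [Real.exp_lt_one_iff]; linarith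
  have hgeo : Summable (fun n:ℕ => Real.exp (-(φ b)) * Real.exp (-d)^n) :=
    (summable_geometric_of_lt_one (Real.exp_pos _).le hexpd1).mul_left _
  have hshiftbound : ∀ (m0 : ℕ), b ≤ (m0:ℝ) + 1 →
      ∀ i:ℕ, G (i + m0) ≤ Real.exp (-(φ b)) * Real.exp (-d)^i := by
    intro m0 hm0 i
    have hib : b ≤ ((i + m0 : ℕ):ℝ) + 1 := by
      push_cast
      linarith only [hm0, Nat.cast_nonneg (α := ℝ) i]
    refine le_trans (hGb _ hib) ?_
    apply mul_le_mul_of_nonneg_left ?_ (Real.exp_pos _).le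
    rw [← Real.exp_nat_mul]
    apply Real.exp_le_exp.2
    have hcast : (i:ℝ) ≤ ((i + m0 : ℕ):ℝ) + 1 - b := by
      push_cast
      linarith only [hm0]
    linarith only [mul_le_mul_of_nonneg_left hcast hdpos.le]
  have hsumG : Summable G := by
    apply (summable_nat_add_iff nb).1
    apply Summable.of_nonneg_of_le (fun n => (hGpos _).le) ?_ hgeo
    intro n
    exact hshiftbound nb (by linarith) n
  -- the pieces
  set fM : ℕ → ℝ := fun n => if a ≤ (n:ℝ)+1 ∧ (n:ℝ)+1 < b then G n else 0 with hfM
  set fL1 : ℕ → ℝ := fun n => if (n:ℝ)+1 < (Rn:ℝ) then G n else 0 with hfL1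
  set fL2 : ℕ → ℝ := fun n => if (Rn:ℝ) ≤ (n:ℝ)+1 ∧ (n:ℝ)+1 < a then G n else 0 with hfL2
  set fR : ℕ → ℝ := fun n => if b ≤ (n:ℝ)+1 then G n else 0 with hfR
  have hfMnn : ∀ n, 0 ≤ fM n := by
    intro n; rw [hfM]; dsimp only; split_ifs; exacts [(hGpos n).le, le_rfl]
  have hfL1nn : ∀ n, 0 ≤ fL1 n := by
    intro n; rw [hfL1]; dsimp only; split_ifs; exacts [(hGpos n).le, le_rfl]
  have hfL2nn : ∀ n, 0 ≤ fL2 n := by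
    intro n; rw [hfL2]; dsimp only; split_ifs; exacts [(hGpos n).le, le_rfl]
  have hfRnn : ∀ n, 0 ≤ fR n := by
    intro n; rw [hfR]; dsimp only; split_ifs; exacts [(hGpos n).le, le_rfl]
  have hfMle : ∀ n, fM n ≤ G n := by
    intro n; rw [hfM]; dsimp only; split_ifs; exacts [le_rfl, (hGpos n).le]
  have hfL1le : ∀ n, fL1 n ≤ G n := by
    intro n; rw [hfL1]; dsimp only; split_ifs; exacts [le_rfl, (hGpos n).le]
  have hfL2le : ∀ n, fL2 n ≤ G n := by
    intro n; rw [hfL2]; dsimp only; split_ifs; exacts [le_rfl, (hGpos n).le]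
  have hfRle : ∀ n, fR n ≤ G n := by
    intro n; rw [hfR]; dsimp only; split_ifs; exacts [le_rfl, (hGpos n).le]
  have hsumM : Summable fM := Summable.of_nonneg_of_le hfMnn hfMle hsumG
  have hsumL1 : Summable fL1 := Summable.of_nonneg_of_le hfL1nn hfL1le hsumG
  have hsumL2 : Summable fL2 := Summable.of_nonneg_of_le hfL2nn hfL2le hsumG
  have hsumR : Summable fR := Summable.of_nonneg_of_le hfRnn hfRle hsumG
  have hSpart : Spart u μ a b = ∑' n, fM n := by
    rw [Spart]
    apply tsum_congr
    intro n
    rw [hfM]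
    dsimp only
    split_ifs with h
    · rw [hG]; congr 1; simp only [hφdef]; ring
    · rfl
  have hdecomp : ∀ n, G n = fL1 n + fL2 n + fM n + fR n := by
    intro n
    rw [hfL1, hfL2, hfM, hfR]
    dsimp only
    by_cases h1 : ((n:ℝ)+1) < (Rn:ℝ)
    · rw [if_pos h1, if_neg (fun h => absurd h.1 (not_le.2 h1)),
        if_neg (fun h => by linarith [h.1]), if_neg (fun h => by linarith)]
      ring
    · push_neg at h1
      rw [if_neg (not_lt.2 h1)]
      by_cases h2 : ((n:ℝ)+1) < a
      · rw [if_pos ⟨h1, h2⟩, if_neg (fun h => by linarith [h.1]), if_neg (fun h => by linarith)]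
        ring
      · push_neg at h2
        rw [if_neg (fun h => absurd h.2 (not_lt.2 h2))]
        by_cases h3 : ((n:ℝ)+1) < b
        · rw [if_pos ⟨h2, h3⟩, if_neg (fun h => by linarith)]
          ring
        · push_neg at h3
          rw [if_neg (fun h => absurd h.2 (not_lt.2 h3)), if_pos h3]
          ring
  have hStoteq : Stot u μ = (∑' n, fL1 n) + (∑' n, fL2 n) + Spart u μ a b + (∑' n, fR n) := by
    rw [hStot, hSpart, tsum_congr hdecomp,
      Summable.tsum_add ((hsumL1.add hsumL2).add hsumM) hsumR,
      Summable.tsum_add (hsumL1.add hsumL2) hsumM, Summable.tsum_add hsumL1 hsumL2]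
  -- left tail, small-k block
  have hφRa : φ a ≤ φ (Rn:ℝ) :=
    hφanti (Set.mem_Icc.2 ⟨le_rfl, hRnκ⟩) (Set.mem_Icc.2 ⟨haRn, haκ⟩) haRn
  have hsmallG : ∀ n:ℕ, ((n:ℝ)+1) < (Rn:ℝ) → G n ≤ Real.exp C * Real.exp (-(φ a)) := by
    intro n hn
    have hk1 : (1:ℝ) ≤ (n:ℝ)+1 := by linarith [Nat.cast_nonneg (α := ℝ) n]
    have hkRn : (n:ℝ)+1 ≤ (Rn:ℝ) := hn.le
    have hminval := hmin ((n:ℝ)+1) (Set.mem_Icc.2 ⟨hk1, hkRn⟩)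
    have hμk : μ0 * (((n:ℝ)+1) - Rn) ≤ μ * (((n:ℝ)+1) - Rn) :=
      mul_le_mul_of_nonpos_right hμle (by linarith)
    have habs : -(|μ0| * Rn) ≤ μ0 * (((n:ℝ)+1) - Rn) := by
      have h1 : |μ0 * (((n:ℝ)+1) - Rn)| ≤ |μ0| * Rn := by
        rw [abs_mul]
        apply mul_le_mul_of_nonneg_left ?_ (abs_nonneg μ0)
        rw [abs_of_nonpos (by linarith)]
        linarith
      linarith [neg_abs_le (μ0 * (((n:ℝ)+1) - Rn))]
    have hφk : φ (Rn:ℝ) - C ≤ φ ((n:ℝ)+1) := by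
      simp only [hφdef]
      linarith only [hμk, habs, hminval]
    rw [hG, ← Real.exp_add]
    apply Real.exp_le_exp.2
    linarith only [hφk, hφRa]
  have hTL1 : (∑' n, fL1 n) ≤ (Rn:ℝ) * (Real.exp C * Real.exp (-(φ a))) := by
    rw [tsum_eq_sum (s := Finset.range Rn) ?_]
    · calc ∑ n ∈ Finset.range Rn, fL1 n
          ≤ ∑ n ∈ Finset.range Rn, Real.exp C * Real.exp (-(φ a)) := by
            apply Finset.sum_le_sum
            intro n _
            rw [hfL1]
            dsimp only
            split_ifs with h
            · exact hsmallG n h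
            · positivity
        _ = (Rn:ℝ) * (Real.exp C * Real.exp (-(φ a))) := by
            rw [Finset.sum_const, Finset.card_range, nsmul_eq_mul]
    · intro n hn
      rw [Finset.mem_range, not_lt] at hn
      rw [hfL1]
      dsimp only
      rw [if_neg (not_lt.2 ?_)]
      have : (Rn:ℝ) ≤ (n:ℝ) := Nat.cast_le.2 hn
      linarith only [this]
  -- left tail, main block
  set na : ℕ := ⌈a⌉₊ with hna
  have hana : a ≤ (na:ℝ) := Nat.le_ceil a
  have hna_lt : (na:ℝ) < a + 1 := Nat.ceil_lt_add_one hapos.le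
  have hna1 : 1 ≤ na := Nat.ceil_pos.2 hapos
  set m : ℕ := na - 1 with hm
  have hmcast : (m:ℝ) = (na:ℝ) - 1 := by
    rw [hm, Nat.cast_sub hna1, Nat.cast_one]
  have hm_le : (m:ℝ) ≤ a := by rw [hmcast]; linarith
  have hsupp2 : ∀ n, n ∉ Finset.range m → fL2 n = 0 := by
    intro n hn
    rw [Finset.mem_range, not_lt] at hn
    rw [hfL2]
    dsimp only
    rw [if_neg]
    rintro ⟨-, h2⟩
    have h3 : na ≤ n + 1 := by omega
    have h4 : (na:ℝ) ≤ (n:ℝ)+1 := by exact_mod_cast h3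
    linarith only [h2, h4, hana]
  have hBleft : ∀ n:ℕ, (Rn:ℝ) ≤ (n:ℝ)+1 → (n:ℝ)+1 < a →
      G n ≤ Real.exp (-(φ a)) * Real.exp (-((M*(1-lam1))/a * (a - ((n:ℝ)+1)))) := by
    intro n h1 h2
    have hkpos : (0:ℝ) < (n:ℝ)+1 := by linarith [Nat.cast_nonneg (α := ℝ) n]
    have hψ := hψanti (Set.mem_Icc.2 ⟨h1, h2.le⟩) (Set.mem_Icc.2 ⟨haRn, le_rfl⟩) h2.le
    simp only at hψ
    have hlog : Real.log ((n:ℝ)+1) - Real.log a ≤ ((n:ℝ)+1)/a - 1 := by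
      have h3 := Real.log_le_sub_one_of_pos (show (0:ℝ) < ((n:ℝ)+1)/a by positivity)
      rwa [Real.log_div (ne_of_gt hkpos) (ne_of_gt hapos)] at h3
    have hple : (0:ℝ) ≤ M*(1-lam1) := by positivity
    have hId : (M*(1-lam1))/a * (a - ((n:ℝ)+1)) = (M*(1-lam1)) * (1 - ((n:ℝ)+1)/a) := by
      field_simp
    rw [hG, ← Real.exp_add]
    apply Real.exp_le_exp.2
    rw [hId]
    clear_value a b φ d G fM fL1 fL2 fR na m
    linarith only [mul_le_mul_of_nonneg_left hlog hple, hψ]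
  have hTL2 : (∑' n, fL2 n) ≤ Real.exp (-(φ a)) * (1 + a/(M*(1-lam1))) := by
    rw [tsum_eq_sum (s := Finset.range m) hsupp2]
    set r : ℝ := Real.exp (-((M*(1-lam1))/a)) with hr
    have hr0 : (0:ℝ) ≤ r := (Real.exp_pos _).le
    have hr1 : r < 1 := by
      rw [hr, Real.exp_lt_one_iff]
      have : (0:ℝ) < (M*(1-lam1))/a := by positivity
      linarith
    have hstep : ∀ n ∈ Finset.range m, fL2 n ≤ Real.exp (-(φ a)) * r^(m - 1 - n) := by
      intro n hn
      rw [Finset.mem_range] at hn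
      rw [hfL2]
      dsimp only
      split_ifs with h
      · refine le_trans (hBleft n h.1 h.2) ?_
        apply mul_le_mul_of_nonneg_left ?_ (Real.exp_pos _).le
        rw [hr, ← Real.exp_nat_mul]
        apply Real.exp_le_exp.2
        have hcast : ((m - 1 - n:ℕ):ℝ) ≤ a - ((n:ℝ)+1) := by
          have h5 : m - 1 - n ≤ m := by omega
          have h6 : ((m - 1 - n:ℕ):ℝ) ≤ (m:ℝ) := Nat.cast_le.2 h5
          by_cases h7 : n + 2 ≤ m
          · have h8 : m - 1 - n + (n + 2) = m + 1 := by omega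
            have h9 : ((m - 1 - n:ℕ):ℝ) + ((n:ℝ) + 2) = (m:ℝ) + 1 := by
              exact_mod_cast congrArg (Nat.cast : ℕ → ℝ) h8
            linarith only [h9, hm_le]
          · have h8 : m - 1 - n = 0 := by omega
            rw [h8]
            push_cast
            have h10 : (n:ℝ) + 1 < a := h.2
            linarith only [h10]
        have hpa : (0:ℝ) ≤ (M*(1-lam1))/a := by positivity
        linarith only [mul_le_mul_of_nonneg_left hcast hpa]
      · positivity
    calc ∑ n ∈ Finset.range m, fL2 n
        ≤ ∑ n ∈ Finset.range m, Real.exp (-(φ a)) * r^(m - 1 - n) := Finset.sum_le_sum hstep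
      _ = Real.exp (-(φ a)) * ∑ n ∈ Finset.range m, r^(m - 1 - n) := by rw [← Finset.mul_sum]
      _ ≤ Real.exp (-(φ a)) * (1 + a/(M*(1-lam1))) := by
          apply mul_le_mul_of_nonneg_left ?_ (Real.exp_pos _).le
          rw [Finset.sum_range_reflect (fun j => r^j) m]
          calc ∑ j ∈ Finset.range m, r^j
              ≤ ∑' j:ℕ, r^j :=
                Summable.sum_le_tsum _ (fun i _ => by positivity) (summable_geometric_of_lt_one hr0 hr1)
            _ = (1 - r)⁻¹ := tsum_geometric_of_lt_one hr0 hr1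
            _ ≤ 1 + 1/((M*(1-lam1))/a) := by
                rw [hr]
                exact geom_inv_bound (by positivity)
            _ = 1 + a/(M*(1-lam1)) := by rw [one_div_div]
  -- right tail
  have hsupp3 : ∀ i ∈ Finset.range (nb - 1), fR i = 0 := by
    intro i hi
    rw [Finset.mem_range] at hi
    rw [hfR]
    dsimp only
    rw [if_neg]
    intro h
    have h2 : i + 1 ≤ nb - 1 := hi
    have h3 : ((i:ℝ)+1) ≤ (nb:ℝ) - 1 := by
      have h4 : ((i+1:ℕ):ℝ) ≤ ((nb-1:ℕ):ℝ) := Nat.cast_le.2 h2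
      rw [Nat.cast_sub hnb1] at h4
      push_cast at h4
      linarith only [h4]
    linarith only [h, h3, hnbb]
  have hTRbound : (∑' n, fR n) ≤ Real.exp (-(φ b)) * (1 + κv/(M*(1-1/lam2))) := by
    have hkey := Summable.sum_add_tsum_nat_add (f := fR) (nb - 1) hsumR
    rw [Finset.sum_eq_zero hsupp3, zero_add] at hkey
    rw [← hkey]
    have hmb : b ≤ ((nb - 1:ℕ):ℝ) + 1 := by
      rw [Nat.cast_sub hnb1]
      push_cast
      linarith only [hbnb]
    have hstep : ∀ i:ℕ, fR (i + (nb - 1)) ≤ Real.exp (-(φ b)) * Real.exp (-d)^i := by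
      intro i
      rw [hfR]
      dsimp only
      split_ifs with h
      · exact hshiftbound (nb - 1) hmb i
      · positivity
    calc (∑' i, fR (i + (nb - 1)))
        ≤ ∑' i:ℕ, Real.exp (-(φ b)) * Real.exp (-d)^i :=
          Summable.tsum_le_tsum hstep ((summable_nat_add_iff (nb - 1)).2 hsumR) hgeo
      _ = Real.exp (-(φ b)) * (1 - Real.exp (-d))⁻¹ := by
          rw [tsum_mul_left, tsum_geometric_of_lt_one (Real.exp_pos _).le hexpd1]
      _ ≤ Real.exp (-(φ b)) * (1 + κv/(M*(1-1/lam2))) := by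
          apply mul_le_mul_of_nonneg_left ?_ (Real.exp_pos _).le
          refine le_trans (geom_inv_bound hdpos) ?_
          rw [hd, one_div_div]
  -- left window
  set nκ : ℕ := ⌊κv⌋₊ with hnκ
  have hκnκ : (nκ:ℝ) ≤ κv := Nat.floor_le hκpos.le
  have hκnκ' : κv - 1 < (nκ:ℝ) := Nat.sub_one_lt_floor κv
  have hnam : (na:ℝ) - 1 ≤ a := by linarith only [hna_lt]
  have hwinL : ∀ n ∈ Finset.Ico (na - 1) nκ, Real.exp (-(φ a)) ≤ fM n := by
    intro n hn
    rw [Finset.mem_Ico] at hn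
    have h1 : na ≤ n + 1 := by omega
    have h2 : (na:ℝ) ≤ (n:ℝ) + 1 := by exact_mod_cast h1
    have h3 : n + 1 ≤ nκ := by omega
    have h4 : (n:ℝ) + 1 ≤ (nκ:ℝ) := by exact_mod_cast h3
    have hka : a ≤ (n:ℝ)+1 := le_trans hana h2
    have hkκ : (n:ℝ)+1 ≤ κv := le_trans h4 hκnκ
    have hkb : (n:ℝ)+1 < b := by linarith only [hkκ, hκb2]
    rw [hfM]
    dsimp only
    rw [if_pos ⟨hka, hkb⟩, hG]
    apply Real.exp_le_exp.2
    simp only [neg_le_neg_iff]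
    exact hφanti (Set.mem_Icc.2 ⟨haRn, haκ⟩)
      (Set.mem_Icc.2 ⟨le_trans haRn hka, hkκ⟩) hka
  have hcardL : κv - a - 1 ≤ ((Finset.Ico (na - 1) nκ).card : ℝ) := by
    rw [Nat.card_Ico]
    have h1 : na - 1 ≤ nκ := by
      have h2 : ((na - 1:ℕ):ℝ) < (nκ:ℝ) := by
        rw [Nat.cast_sub hna1]
        push_cast
        linarith only [hnam, haκ2, hκnκ']
      exact_mod_cast h2.le
    rw [Nat.cast_sub h1, Nat.cast_sub hna1]
    push_cast
    linarith only [hκnκ', hnam]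
  have hWL : (κv - a - 1) * Real.exp (-(φ a)) ≤ Spart u μ a b := by
    rw [hSpart]
    calc (κv - a - 1) * Real.exp (-(φ a))
        ≤ ((Finset.Ico (na - 1) nκ).card : ℝ) * Real.exp (-(φ a)) :=
          mul_le_mul_of_nonneg_right hcardL (Real.exp_pos _).le
      _ ≤ ∑ n ∈ Finset.Ico (na - 1) nκ, fM n := by
          have h := Finset.card_nsmul_le_sum (Finset.Ico (na - 1) nκ) fM
            (Real.exp (-(φ a))) hwinL
          rwa [nsmul_eq_mul] at h
      _ ≤ ∑' n, fM n := Summable.sum_le_tsum _ (fun i _ => hfMnn i) hsumM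
  -- right window
  set nκ2 : ℕ := ⌈κv⌉₊ with hnκ2
  have hκ2low : κv ≤ (nκ2:ℝ) := Nat.le_ceil κv
  have hκ2up : (nκ2:ℝ) < κv + 1 := Nat.ceil_lt_add_one hκpos.le
  have hκ21 : 1 ≤ nκ2 := Nat.ceil_pos.2 hκpos
  have hwinR : ∀ n ∈ Finset.Ico (nκ2 - 1) (nb - 1), Real.exp (-(φ b)) ≤ fM n := by
    intro n hn
    rw [Finset.mem_Ico] at hn
    have h1 : nκ2 ≤ n + 1 := by omega
    have h2 : (nκ2:ℝ) ≤ (n:ℝ) + 1 := by exact_mod_cast h1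
    have h3 : n + 1 ≤ nb - 1 := by omega
    have h4 : ((n:ℝ)) + 1 ≤ ((nb - 1:ℕ):ℝ) := by exact_mod_cast h3
    rw [Nat.cast_sub hnb1] at h4
    push_cast at h4
    have hkκ : κv ≤ (n:ℝ)+1 := le_trans hκ2low h2
    have hkb : (n:ℝ)+1 < b := by linarith only [h4, hnbb]
    have hka : a ≤ (n:ℝ)+1 := le_trans haκ hkκ
    rw [hfM]
    dsimp only
    rw [if_pos ⟨hka, hkb⟩, hG]
    apply Real.exp_le_exp.2
    simp only [neg_le_neg_iff]
    exact hφmono (Set.mem_Ici.2 hkκ) (Set.mem_Ici.2 hκb) hkb.le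
  have hcardR : κv * lam2 - κv - 1 ≤ ((Finset.Ico (nκ2 - 1) (nb - 1)).card : ℝ) := by
    rw [Nat.card_Ico]
    have h1 : nκ2 - 1 ≤ nb - 1 := by
      have h2 : ((nκ2 - 1:ℕ):ℝ) < ((nb - 1:ℕ):ℝ) := by
        rw [Nat.cast_sub hκ21, Nat.cast_sub hnb1]
        push_cast
        linarith only [hκ2up, hκb2, hbnb]
      exact_mod_cast h2.le
    rw [Nat.cast_sub h1, Nat.cast_sub hκ21, Nat.cast_sub hnb1]
    push_cast
    have : κv * lam2 = b := by rw [hb]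
    linarith only [hκ2up, hbnb, this, hbnb]
  have hWR : (κv * lam2 - κv - 1) * Real.exp (-(φ b)) ≤ Spart u μ a b := by
    rw [hSpart]
    calc (κv * lam2 - κv - 1) * Real.exp (-(φ b))
        ≤ ((Finset.Ico (nκ2 - 1) (nb - 1)).card : ℝ) * Real.exp (-(φ b)) :=
          mul_le_mul_of_nonneg_right hcardR (Real.exp_pos _).le
      _ ≤ ∑ n ∈ Finset.Ico (nκ2 - 1) (nb - 1), fM n := by
          have h := Finset.card_nsmul_le_sum (Finset.Ico (nκ2 - 1) (nb - 1)) fM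
            (Real.exp (-(φ b))) hwinR
          rwa [nsmul_eq_mul] at h
      _ ≤ ∑' n, fM n := Summable.sum_le_tsum _ (fun i _ => hfMnn i) hsumM
  -- final numeric assembly
  have hexpa : (0:ℝ) < Real.exp (-(φ a)) := Real.exp_pos _
  have hexpb : (0:ℝ) < Real.exp (-(φ b)) := Real.exp_pos _
  have hTLfin : (∑' n, fL1 n) + (∑' n, fL2 n) ≤ (ε/4) * Spart u μ a b := by
    have h1 : κv * (1 - lam1) / 2 ≤ κv - a - 1 := by
      rw [ha]; linarith only [hκα]
    have h2 : (Rn:ℝ) * Real.exp C + 1 ≤ ε * (κv * (1 - lam1)) / 16 := by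
      rw [div_le_iff₀ (by positivity)] at hK4
      linarith only [hK4]
    have h3 : a / (M * (1 - lam1)) ≤ ε * (κv * (1 - lam1)) / 16 := by
      rw [div_le_iff₀ (by positivity), ha]
      rw [div_le_iff₀ (by positivity)] at hMa
      linarith only [mul_le_mul_of_nonneg_left hMa hκpos.le]
    calc (∑' n, fL1 n) + (∑' n, fL2 n)
        ≤ (Rn:ℝ) * (Real.exp C * Real.exp (-(φ a)))
            + Real.exp (-(φ a)) * (1 + a/(M*(1-lam1))) := add_le_add hTL1 hTL2
      _ = ((Rn:ℝ) * Real.exp C + 1 + a/(M*(1-lam1))) * Real.exp (-(φ a)) := by ring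
      _ ≤ ((ε/4) * (κv - a - 1)) * Real.exp (-(φ a)) := by
          apply mul_le_mul_of_nonneg_right ?_ hexpa.le
          linarith only [h2, h3, mul_le_mul_of_nonneg_left h1 hε.le]
      _ = (ε/4) * ((κv - a - 1) * Real.exp (-(φ a))) := by ring
      _ ≤ (ε/4) * Spart u μ a b := by
          apply mul_le_mul_of_nonneg_left hWL (by positivity)
  have hTRfin : (∑' n, fR n) ≤ (ε/4) * Spart u μ a b := by
    have h1 : κv * (lam2 - 1) / 2 ≤ κv * lam2 - κv - 1 := by linarith only [hκβ]
    have h2 : (1:ℝ) ≤ ε * (κv * (lam2 - 1)) / 16 := by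
      rw [div_le_iff₀ (by positivity)] at hK5
      linarith only [hK5]
    have h3 : κv / (M * (1 - 1/lam2)) ≤ ε * (κv * (lam2 - 1)) / 16 := by
      rw [div_le_iff₀ (by positivity)]
      rw [div_le_iff₀ (by positivity)] at hMb
      linarith only [mul_le_mul_of_nonneg_left hMb hκpos.le]
    calc (∑' n, fR n)
        ≤ Real.exp (-(φ b)) * (1 + κv/(M*(1-1/lam2))) := hTRbound
      _ = (1 + κv/(M*(1-1/lam2))) * Real.exp (-(φ b)) := by ring
      _ ≤ ((ε/4) * (κv * lam2 - κv - 1)) * Real.exp (-(φ b)) := by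
          apply mul_le_mul_of_nonneg_right ?_ hexpb.le
          linarith only [h2, h3, mul_le_mul_of_nonneg_left h1 hε.le]
      _ = (ε/4) * ((κv * lam2 - κv - 1) * Real.exp (-(φ b))) := by ring
      _ ≤ (ε/4) * Spart u μ a b := by
          apply mul_le_mul_of_nonneg_left hWR (by positivity)
  have hSpos : 0 < Spart u μ a b := by
    refine lt_of_lt_of_le ?_ hWL
    have h1 : (1:ℝ) ≤ κv - a - 1 := by rw [ha]; linarith only [hκα]
    exact mul_pos (lt_of_lt_of_le one_pos h1) hexpa
  have hL1nn : 0 ≤ ∑' n, fL1 n := tsum_nonneg hfL1nn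
  have hL2nn : 0 ≤ ∑' n, fL2 n := tsum_nonneg hfL2nn
  have hRnn : 0 ≤ ∑' n, fR n := tsum_nonneg hfRnn
  have hSle : Spart u μ a b ≤ Stot u μ := by linarith only [hStoteq, hL1nn, hL2nn, hRnn]
  have hStotpos : 0 < Stot u μ := lt_of_lt_of_le hSpos hSle
  have hfrac : Stot u μ - Spart u μ a b ≤ (ε/2) * Stot u μ := by
    have h4 : (∑' n, fL1 n) + (∑' n, fL2 n) + (∑' n, fR n) ≤ (ε/2) * Spart u μ a b := by
      linarith only [hTLfin, hTRfin]
    have h5 : (ε/2) * Spart u μ a b ≤ (ε/2) * Stot u μ :=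
      mul_le_mul_of_nonneg_left hSle (by positivity)
    linarith only [hStoteq, h4, h5]
  have hratle : Spart u μ a b / Stot u μ ≤ 1 := (div_le_one hStotpos).2 hSle
  rw [Real.dist_eq, abs_of_nonpos (by linarith only [hratle])]
  have h7 : (Stot u μ - Spart u μ a b) / Stot u μ ≤ ε/2 :=
    (div_le_iff₀ hStotpos).2 (by linarith only [hfrac])
  have h8 : 1 - Spart u μ a b / Stot u μ = (Stot u μ - Spart u μ a b) / Stot u μ := by
    field_simp
  linarith only [h7, h8, hε]

/-- Step-function concentration: if `x² u''(x) → ∞`, `μ⋆ = -lim u'`, and `κ(μ)` is the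
largest solution of `u'(κ) = -μ`, then for `0 < λ₁ < 1 < λ₂` the sum `S_μ`
concentrates on `[κλ₁, κλ₂)` as `μ ↓ μ⋆`. -/
theorem S_concentrates_near_kappa
    (u : ℝ → ℝ) (μstar : EReal) (κ : ℝ → ℝ) (lam1 lam2 : ℝ)
    (hlam1 : 0 < lam1) (hlam1' : lam1 < 1) (hlam2 : 1 < lam2)
    (hdiff : ∀ x ∈ Set.Ioi (0:ℝ),
      DifferentiableAt ℝ u x ∧ DifferentiableAt ℝ (deriv u) x)
    (hlim : Tendsto (fun x => x ^ 2 * deriv (deriv u) x) atTop atTop)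
    (hmustar : Tendsto (fun x => ((deriv u x : ℝ) : EReal)) atTop (nhds (-μstar)))
    (hκ : ∀ μ : ℝ, μstar < (μ : EReal) →
      deriv u (κ μ) = -μ ∧ ∀ y : ℝ, 0 < y → deriv u y = -μ → y ≤ κ μ) :
    Tendsto (fun μ : ℝ => Spart u μ (κ μ * lam1) (κ μ * lam2) / Stot u μ)
      (muDownTo μstar) (nhds 1) := by
  rcases eq_or_ne μstar ⊤ with htop | htop
  · rw [htop, muDownTo, Set.Ioi_top, nhdsWithin_empty, Filter.comap_bot]
    exact tendsto_bot
  obtain ⟨μ0, hμ0, -⟩ := EReal.exists_between_coe_real (lt_top_iff_ne_top.2 htop)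
  -- basic filter facts
  have hLgt : ∀ᶠ μ : ℝ in muDownTo μstar, μstar < (μ:EReal) := by
    have : (fun μ:ℝ => (μ:EReal)) ⁻¹' (Set.Ioi μstar) ∈ muDownTo μstar :=
      preimage_mem_comap self_mem_nhdsWithin
    filter_upwards [this] with μ hμ; exact hμ
  have hLlt : ∀ y : EReal, μstar < y → ∀ᶠ μ : ℝ in muDownTo μstar, (μ:EReal) < y := by
    intro y hy
    have : (fun μ:ℝ => (μ:EReal)) ⁻¹' (Set.Iio y) ∈ muDownTo μstar :=
      preimage_mem_comap (nhdsWithin_le_nhds (Iio_mem_nhds hy))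
    filter_upwards [this] with μ hμ; exact hμ
  -- a base threshold for monotonicity of deriv u
  obtain ⟨r0, hr0⟩ := eventually_atTop.1 (hlim.eventually_ge_atTop 1)
  set R0 : ℝ := max r0 1 with hR0def
  have hR0one : (1:ℝ) ≤ R0 := le_max_right _ _
  have hupos : ∀ x : ℝ, R0 ≤ x → 0 < deriv (deriv u) x := by
    intro x hx
    have hx1 : (1:ℝ) ≤ x := le_trans hR0one hx
    have h := hr0 x (le_trans (le_max_left _ _) hx)
    nlinarith
  have hcont' : ∀ (s : Set ℝ), s ⊆ Set.Ioi (0:ℝ) → ContinuousOn (deriv u) s := by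
    intro s hs x hx
    exact ((hdiff x (hs hx)).2).continuousAt.continuousWithinAt
  have hu'mono : StrictMonoOn (deriv u) (Set.Ici R0) := by
    apply strictMonoOn_of_deriv_pos (convex_Ici R0)
    · apply hcont'
      intro x hx
      exact lt_of_lt_of_le (by linarith [hR0one] : (0:ℝ) < R0) hx
    · intro x hx
      rw [interior_Ici] at hx
      exact hupos x (le_of_lt hx)
  have hu'lt : ∀ x : ℝ, R0 ≤ x → ((deriv u x : ℝ) : EReal) < -μstar := by
    intro x hx
    have h1 : deriv u x < deriv u (x+1) :=
      hu'mono hx (by simp only [Set.mem_Ici]; linarith) (by linarith)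
    have h2 : ((deriv u (x+1) : ℝ) : EReal) ≤ -μstar := by
      apply ge_of_tendsto hmustar
      filter_upwards [eventually_ge_atTop (x+1)] with y hy
      rcases eq_or_lt_of_le hy with h | h
      · rw [← h]
      · exact_mod_cast (hu'mono (by simp only [Set.mem_Ici]; linarith)
          (by simp only [Set.mem_Ici]; linarith) h).le
    exact lt_of_lt_of_le (by exact_mod_cast h1) h2
  -- κ tends to infinity
  have hκtend : Tendsto κ (muDownTo μstar) atTop := by
    rw [tendsto_atTop]
    intro X
    set x1 : ℝ := max X R0 with hx1def
    have hx1R : R0 ≤ x1 := le_max_right _ _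
    have hx1X : X ≤ x1 := le_max_left _ _
    have h1 : ((deriv u x1 : ℝ) : EReal) < -μstar := hu'lt x1 hx1R
    have h1' : μstar < ((- deriv u x1 : ℝ) : EReal) := by
      rw [EReal.coe_neg, show μstar = -(-μstar) from (neg_neg _).symm]
      exact EReal.neg_lt_neg_iff.mpr h1
    filter_upwards [hLgt, hLlt _ h1'] with μ hμs hμlt
    have h2 : deriv u x1 < -μ := by
      have := EReal.coe_lt_coe_iff.1 hμlt
      linarith
    have hlt : ((-μ:ℝ) : EReal) < -μstar := by
      rw [EReal.coe_neg]
      exact EReal.neg_lt_neg_iff.mpr hμs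
    have h3 : ∀ᶠ x in atTop, ((-μ:ℝ):EReal) < ((deriv u x:ℝ):EReal) :=
      hmustar.eventually_const_lt hlt
    obtain ⟨x2, hx2gt, hx2ge⟩ := (h3.and (eventually_ge_atTop (x1+1))).exists
    have hx2gt' : -μ < deriv u x2 := EReal.coe_lt_coe_iff.1 hx2gt
    have hIVT := intermediate_value_Icc (by linarith : x1 ≤ x2)
      (hcont' _ (fun z hz => lt_of_lt_of_le (by linarith [hR0one] : (0:ℝ) < x1) hz.1))
    obtain ⟨y, hy, hyeq⟩ := hIVT ⟨h2.le, hx2gt'.le⟩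
    have hκy := (hκ μ hμs).2 y (by linarith [hy.1, hR0one, hx1R] : (0:ℝ) < y) hyeq
    linarith [hy.1]
  rw [Metric.tendsto_nhds]
  intro ε hε
  have hα : (0:ℝ) < 1 - lam1 := by linarith
  have hβ : (0:ℝ) < lam2 - 1 := by linarith
  have hcc : (0:ℝ) < 1 - 1/lam2 := by
    have h : 1/lam2 < 1 := by rw [div_lt_one (by linarith)]; linarith
    linarith
  have hnn1 : (0:ℝ) ≤ 16*lam1/(ε*(1-lam1)^2) :=
    div_nonneg (mul_nonneg (by norm_num) hlam1.le) (mul_pos hε (pow_pos hα 2)).le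
  have hnn2 : (0:ℝ) ≤ 16/(ε*(1-1/lam2)*(lam2-1)) :=
    div_nonneg (by norm_num) (mul_pos (mul_pos hε hcc) hβ).le
  set M : ℝ := 1 + 16*lam1/(ε*(1-lam1)^2) + 16/(ε*(1-1/lam2)*(lam2-1)) with hM
  have hM1 : 1 ≤ M := by rw [hM]; linarith
  have hMa : 16*lam1/(ε*(1-lam1)^2) ≤ M := by rw [hM]; linarith
  have hMb : 16/(ε*(1-1/lam2)*(lam2-1)) ≤ M := by rw [hM]; linarith
  obtain ⟨r1, hr1⟩ := eventually_atTop.1 (hlim.eventually_ge_atTop M)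
  set Rn : ℕ := ⌈max r1 R0⌉₊ with hRn
  have hRnR0 : R0 ≤ (Rn:ℝ) := le_trans (le_max_right _ _) (Nat.le_ceil _)
  have hRn1 : (1:ℝ) ≤ (Rn:ℝ) := le_trans hR0one hRnR0
  have hM' : ∀ x:ℝ, (Rn:ℝ) ≤ x → M ≤ x^2 * deriv (deriv u) x := by
    intro x hx
    exact hr1 x (le_trans (le_trans (le_max_left _ _) (Nat.le_ceil _)) hx)
  have hcontu : ContinuousOn u (Set.Icc (1:ℝ) (Rn:ℝ)) := by
    intro x hx
    exact ((hdiff x (lt_of_lt_of_le one_pos hx.1)).1).continuousAt.continuousWithinAt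
  obtain ⟨t0, ht0mem, ht0min⟩ := isCompact_Icc.exists_isMinOn
    (Set.nonempty_Icc.2 hRn1) hcontu
  set C : ℝ := |μ0| * Rn + (u Rn - u t0) with hC
  have hmin : ∀ t ∈ Set.Icc (1:ℝ) (Rn:ℝ), |μ0| * Rn + (u Rn - u t) ≤ C := by
    intro t ht
    have h := isMinOn_iff.1 ht0min t ht
    rw [hC]
    linarith only [h]
  have hnn4 : (0:ℝ) ≤ 16*((Rn:ℝ)*Real.exp C + 1)/(ε*(1-lam1)) := by
    apply div_nonneg ?_ (mul_pos hε hα).le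
    have := Real.exp_pos C
    have := Nat.cast_nonneg (α := ℝ) Rn
    positivity
  have hnn5 : (0:ℝ) ≤ 16/(ε*(lam2-1)) := div_nonneg (by norm_num) (mul_pos hε hβ).le
  have hnnt1 : (0:ℝ) ≤ (Rn:ℝ)/lam1 := div_nonneg (Nat.cast_nonneg _) hlam1.le
  have hnnt2 : (0:ℝ) ≤ 2/(1-lam1) := div_nonneg (by norm_num) hα.le
  have hnnt3 : (0:ℝ) ≤ 2/(lam2-1) := div_nonneg (by norm_num) hβ.le
  set K0 : ℝ := (Rn:ℝ)/lam1 + 2/(1-lam1) + 2/(lam2-1)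
    + 16*((Rn:ℝ)*Real.exp C + 1)/(ε*(1-lam1)) + 16/(ε*(lam2-1)) with hK0
  filter_upwards [hLgt, hLlt _ hμ0, hκtend.eventually (eventually_ge_atTop K0)]
    with μ hμs hμlt hκK
  have hμle : μ ≤ μ0 := (EReal.coe_lt_coe_iff.1 hμlt).le
  rw [hK0] at hκK
  exact core_estimate u μ μ0 C M lam1 lam2 Rn (κ μ) ε hlam1 hlam1' hlam2 hε hdiff
    hM1 hMa hMb hRn1 hM' hmin hμle (hκ μ hμs).1
    (by linarith only [hκK, hnnt2, hnnt3, hnn4, hnn5])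
    (by linarith only [hκK, hnnt1, hnnt3, hnn4, hnn5])
    (by linarith only [hκK, hnnt1, hnnt2, hnn4, hnn5])
    (by linarith only [hκK, hnnt1, hnnt2, hnnt3, hnn5])
    (by linarith only [hκK, hnnt1, hnnt2, hnnt3, hnn4])
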